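/- arXiv:1504.07788 — 7 statements merged into one kernel-verified Lean document; each statement's English description precedes it below -/
import Mathlib

section
/- Every element g of the free abelian monoid ℕ^n admits a unique decomposition s_1|…|s_p with s_1, …, s_p in S_n such that s_p ≠ 1 and, for every i < p and every s in S_n, if s_i ≺ s then s does not divide the product s_i s_{i+1} ⋯ s_p. -/
private def GreedyP {n : ℕ} (g : Fin n → ℕ) (L : List (Fin n → ℕ)) : Prop :=
  (∀ s ∈ L, ∀ k, s k ≤ 1) ∧
  L.getLast? ≠ some 0 ∧
  L.sum = g ∧
  (∀ i : ℕ, i + 1 < L.length → ∀ s : Fin n → ℕ, (∀ k, s k ≤ 1) →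
    (∀ k, L.getD i 0 k ≤ s k) → L.getD i 0 ≠ s →
    ¬ (∀ k, s k ≤ (L.drop i).sum k))

private lemma mem_le_listSum {n : ℕ} {L : List (Fin n → ℕ)} {s : Fin n → ℕ} (hs : s ∈ L)
    (k : Fin n) : s k ≤ L.sum k := by
  induction L with
  | nil => simp at hs
  | cons a T ih =>
    rw [List.sum_cons, Pi.add_apply]
    rcases List.mem_cons.1 hs with h | h
    · subst h; omega
    · have := ih h; omega

private lemma greedy_key {n : ℕ} : ∀ m : ℕ, ∀ g : Fin n → ℕ, (∑ k, g k) ≤ m →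
    ∃! L, GreedyP g L := by
  intro m
  induction m with
  | zero =>
    intro g hg
    have hg0 : g = 0 := by
      funext k
      have : g k ≤ ∑ k, g k := Finset.single_le_sum (fun i _ => Nat.zero_le _) (Finset.mem_univ k)
      simp only [Pi.zero_apply]; omega
    subst hg0
    refine ⟨[], ⟨by simp, by simp, by simp, by simp⟩, ?_⟩
    rintro L ⟨h1, h2, h3, h4⟩
    cases L with
    | nil => rfl
    | cons a T =>
      exfalso
      apply h2
      rw [List.getLast?_eq_getLast (l := a :: T) (by simp)]
      congr 1
      funext k
      have := mem_le_listSum (List.getLast_mem (l := a :: T) (by simp)) k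
      rw [h3] at this
      simpa using this
  | succ m ih =>
    intro g hg
    by_cases hg0 : g = 0
    · exact ih g (by subst hg0; simp)
    · set f : Fin n → ℕ := fun k => min (g k) 1 with hf
      have hfle : ∀ k, f k ≤ g k := fun k => min_le_left _ _
      obtain ⟨k0, hk0⟩ : ∃ k, g k ≠ 0 := by
        by_contra h
        push_neg at h
        exact hg0 (funext fun k => h k)
      have hfk0 : f k0 = 1 := by show min (g k0) 1 = 1; omega
      have hsum' : (∑ k, (g - f) k) ≤ m := by
        have hlt : (∑ k, (g - f) k) < ∑ k, g k := by
          apply Finset.sum_lt_sum (fun k _ => by rw [Pi.sub_apply]; omega)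
          exact ⟨k0, Finset.mem_univ k0, by rw [Pi.sub_apply]; omega⟩
        omega
      obtain ⟨T, ⟨hT1, hT2, hT3, hT4⟩, hTu⟩ := ih (g - f) hsum'
      have hfadd : f + (g - f) = g := by
        funext k; have := hfle k; simp only [Pi.add_apply, Pi.sub_apply]; omega
      -- the candidate list
      refine ⟨f :: T, ⟨?_, ?_, ?_, ?_⟩, ?_⟩
      · intro s hs k
        rcases List.mem_cons.1 hs with h | h
        · subst h; exact min_le_right _ _
        · exact hT1 s h k
      · cases T with
        | nil =>
          simp only [List.getLast?_singleton, ne_eq, Option.some_inj]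
          intro h
          have := congrFun h k0
          rw [hfk0] at this
          simp at this
        | cons b T' => rw [List.getLast?_cons_cons]; exact hT2
      · rw [List.sum_cons, hT3, hfadd]
      · intro i hi s hs hle hne hdvd
        cases i with
        | zero =>
          obtain ⟨k, hk⟩ : ∃ k, f k ≠ s k := by
            by_contra h; push_neg at h
            exact hne (by simpa using funext h)
          simp only [List.getD_cons_zero] at hle hne
          have h1 : f k < s k := lt_of_le_of_ne (hle k) hk
          have h2 : s k ≤ 1 := hs k
          have h3 : g k = 0 := by simp [hf] at h1 ⊢; omega
          have := hdvd k
          rw [List.drop_zero, List.sum_cons, hT3, hfadd] at this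
          omega
        | succ j =>
          simp only [List.length_cons, List.getD_cons_succ, List.drop_succ_cons] at hi hle hne hdvd
          exact hT4 j (by omega) s hs hle hne hdvd
      -- uniqueness
      · rintro L ⟨h1, h2, h3, h4⟩
        cases L with
        | nil => exact absurd (by simpa using h3.symm) hg0
        | cons a T' =>
          have haS : ∀ k, a k ≤ 1 := h1 a (List.mem_cons_self (a := a) (l := T'))
          have hale : ∀ k, a k ≤ g k := by
            intro k
            have := mem_le_listSum (List.mem_cons_self (a := a) (l := T')) k
            rw [h3] at this; exact this
          have haf : ∀ k, a k ≤ f k := by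
            intro k; simp [hf]; exact ⟨hale k, haS k⟩
          have haeq : a = f := by
            by_contra hne
            cases T' with
            | nil =>
              apply hne
              funext k
              have hsum : a = g := by simpa using h3
              have h5 := haS k
              have := congrFun hsum k
              show a k = min (g k) 1
              omega
            | cons b T'' =>
              have := h4 0 (by simp) f (fun k => min_le_right _ _)
                (by simpa using haf) (by simpa using hne)
              apply this
              intro k
              rw [List.drop_zero, h3]
              exact hfle k
          subst haeq
          have hT'3 : T'.sum = g - f := by
            funext k
            have := congrFun h3 k
            rw [List.sum_cons, Pi.add_apply] at this
            simp [Pi.sub_apply]; omega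
          have hT'P : GreedyP (g - f) T' := by
            refine ⟨fun s hs k => h1 s (List.mem_cons_of_mem _ hs) k, ?_, hT'3, ?_⟩
            · cases T' with
              | nil => simp
              | cons b T'' => rw [← List.getLast?_cons_cons (a := f)]; exact h2
            · intro j hj s hs hle hne
              have := h4 (j + 1) (by simp; omega) s hs
                (by simpa using hle) (by simpa using hne)
              simpa using this
          rw [hTu T' hT'P]

/-- Every element `g` of the free abelian monoid `ℕ^n` (written here
additively, with identity `0`) admits a unique decomposition `s_1|…|s_p` with entries in
`S_n = {s | ∀ k, s k ≤ 1}` such that `s_p ≠ 0` and, for every `i < p` and every `s ∈ S_n`,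
if `s_i ≺ s` then `s` does not divide `s_i + s_{i+1} + ⋯ + s_p`. -/
theorem freeAbelianMonoid_greedy_normal_form (n : ℕ) (g : Fin n → ℕ) :
    ∃! L : List (Fin n → ℕ),
      (∀ s ∈ L, ∀ k, s k ≤ 1) ∧
      L.getLast? ≠ some 0 ∧
      L.sum = g ∧
      (∀ i : ℕ, i + 1 < L.length → ∀ s : Fin n → ℕ, (∀ k, s k ≤ 1) →
        (∀ k, L.getD i 0 k ≤ s k) → L.getD i 0 ≠ s →
        ¬ (∀ k, s k ≤ (L.drop i).sum k)) := by
  exact greedy_key (∑ k, g k) g le_rfl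
end

section
/- If (M, Δ) is a Garside monoid, then every element of M admits a unique strict Δ-normal decomposition, i.e., a unique strict Δ-normal word s_1|…|s_p with s_1 ⋯ s_p = g (the empty word for g = 1). -/
/-- Left-divisibility: `f ≼ g` iff `f * c = g` for some `c`. -/
def LDvd {M : Type*} [Monoid M] (f g : M) : Prop := ∃ c, f * c = g

/-- Right-divisibility: `f` right-divides `g` iff `c * f = g` for some `c`. -/
def RDvd {M : Type*} [Monoid M] (f g : M) : Prop := ∃ c, c * f = g

/-- A Garside monoid: a cancellative monoid `M` together with a Garside element `Δ`,
satisfying conditions (i)–(iv) of the definition. -/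
structure GarsideMonoid (M : Type*) [Monoid M] where
  /-- The Garside element. -/
  Δ : M
  mul_left_cancel : ∀ a b c : M, a * b = a * c → b = c
  mul_right_cancel : ∀ a b c : M, b * a = c * a → b = c
  /-- (i) a superadditive length-type map. -/
  lam : M → ℕ
  lam_superadd : ∀ f g : M, lam f + lam g ≤ lam (f * g)
  lam_ne_zero : ∀ g : M, g ≠ 1 → lam g ≠ 0
  /-- (ii) any two elements admit a left-gcd. -/
  exists_left_gcd : ∀ f g : M, ∃ d, LDvd d f ∧ LDvd d g ∧ ∀ e, LDvd e f → LDvd e g → LDvd e d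
  /-- (ii) any two elements admit a right-lcm. -/
  exists_right_lcm : ∀ f g : M, ∃ m, LDvd f m ∧ LDvd g m ∧ ∀ e, LDvd f e → LDvd g e → LDvd m e
  /-- (ii) any two elements admit a right-gcd. -/
  exists_right_gcd : ∀ f g : M, ∃ d, RDvd d f ∧ RDvd d g ∧ ∀ e, RDvd e f → RDvd e g → RDvd e d
  /-- (ii) any two elements admit a left-lcm. -/
  exists_left_lcm : ∀ f g : M, ∃ m, RDvd f m ∧ RDvd g m ∧ ∀ e, RDvd f e → RDvd g e → RDvd m e
  /-- (iii) the left- and right-divisors of `Δ` coincide. -/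
  ldvd_iff_rdvd : ∀ d : M, LDvd d Δ ↔ RDvd d Δ
  /-- (iii) the divisors of `Δ` generate `M`. -/
  closure_div : Submonoid.closure {d : M | LDvd d Δ} = ⊤
  /-- (iv) `Div(Δ)` is finite. -/
  div_finite : {d : M | LDvd d Δ}.Finite

/-- A word `s_1|…|s_p` (with entries in `Div(Δ)`) is `Δ`-normal if, for every `i < p` and
every `s ∈ Div(Δ)`, `s_i ≺ s` implies that `s` does not left-divide `s_i s_{i+1} ⋯ s_p`. -/
def DNormal {M : Type*} [Monoid M] (G : GarsideMonoid M) (L : List M) : Prop :=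
  ∀ i : ℕ, i + 1 < L.length → ∀ s : M, LDvd s G.Δ →
    LDvd (L.getD i 1) s → L.getD i 1 ≠ s → ¬ LDvd s ((L.drop i).prod)

section Aux
variable {M : Type*} [Monoid M]

lemma ldvd_refl (a : M) : LDvd a a := ⟨1, mul_one a⟩

lemma ldvd_mul (a b : M) : LDvd a (a * b) := ⟨b, rfl⟩

lemma ldvd_trans {a b c : M} (h1 : LDvd a b) (h2 : LDvd b c) : LDvd a c := by
  obtain ⟨u, rfl⟩ := h1; obtain ⟨v, rfl⟩ := h2; exact ⟨u * v, (mul_assoc _ _ _).symm⟩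

lemma lam_one (G : GarsideMonoid M) : G.lam 1 = 0 := by
  have := G.lam_superadd 1 1
  rw [mul_one] at this; omega

lemma garside_eq_one (G : GarsideMonoid M) {a : M} (h : G.lam a = 0) : a = 1 := by
  by_contra hb; exact G.lam_ne_zero a hb h

lemma ldvd_antisymm (G : GarsideMonoid M) {a b : M} (h1 : LDvd a b) (h2 : LDvd b a) : a = b := by
  obtain ⟨u, rfl⟩ := h1
  obtain ⟨v, hv⟩ := h2
  have h : a * (u * v) = a * 1 := by rw [mul_one, ← mul_assoc, hv]
  have huv : u * v = 1 := G.mul_left_cancel _ _ _ h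
  have := G.lam_superadd u v
  rw [huv, lam_one] at this
  have hu : u = 1 := garside_eq_one G (by omega)
  rw [hu, mul_one]

lemma sum_lam_le (G : GarsideMonoid M) (L : List M) : (L.map G.lam).sum ≤ G.lam L.prod := by
  induction L with
  | nil => simp [lam_one]
  | cons a T ih =>
    simp only [List.map_cons, List.sum_cons, List.prod_cons]
    calc G.lam a + (T.map G.lam).sum ≤ G.lam a + G.lam T.prod := by omega
    _ ≤ _ := G.lam_superadd _ _

lemma eq_one_of_prod_eq_one (G : GarsideMonoid M) {L : List M} (h : L.prod = 1) : ∀ x ∈ L, x = 1 := by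
  intro x hx
  have h1 : (L.map G.lam).sum ≤ 0 := by
    have := sum_lam_le G L; rw [h, lam_one] at this; exact this
  have : G.lam x ≤ (L.map G.lam).sum :=
    List.single_le_sum (fun _ _ => Nat.zero_le _) _ (List.mem_map_of_mem hx)
  exact garside_eq_one G (by omega)

lemma exists_nontrivial_ldvd_of_list (G : GarsideMonoid M) : ∀ (L : List M), (∀ x ∈ L, LDvd x G.Δ) →
    L.prod ≠ 1 → ∃ d, d ≠ 1 ∧ LDvd d G.Δ ∧ LDvd d L.prod := by
  intro L
  induction L with
  | nil => simp
  | cons a T ih =>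
    intro hdvd hprod
    by_cases ha : a = 1
    · subst ha
      rw [List.prod_cons, one_mul] at hprod ⊢
      exact ih (fun x hx => hdvd x (List.mem_cons_of_mem _ hx)) hprod
    · exact ⟨a, ha, hdvd a (List.mem_cons_self), by rw [List.prod_cons]; exact ldvd_mul a T.prod⟩

lemma exists_nontrivial_ldvd (G : GarsideMonoid M) {g : M} (hg : g ≠ 1) :
    ∃ d, d ≠ 1 ∧ LDvd d G.Δ ∧ LDvd d g := by
  have hmem : g ∈ Submonoid.closure {d : M | LDvd d G.Δ} := by
    rw [G.closure_div]; trivial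
  obtain ⟨L, hL, hLp⟩ := Submonoid.exists_list_of_mem_closure hmem
  exact hLp ▸ exists_nontrivial_ldvd_of_list G L hL (hLp.symm ▸ hg)

/-- In a normal word `a :: T`, any divisor of `Δ` dividing the product divides `a`. -/
lemma head_min (G : GarsideMonoid M) {a : M} {T : List M} (ha : LDvd a G.Δ) (hN : DNormal G (a :: T))
    {s : M} (hsΔ : LDvd s G.Δ) (hsg : LDvd s ((a :: T).prod)) : LDvd s a := by
  cases T with
  | nil =>
    rw [List.prod_cons, List.prod_nil, mul_one] at hsg
    exact hsg
  | cons b T' =>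
    obtain ⟨u, hau, hsu, hmin⟩ := G.exists_right_lcm a s
    have huΔ : LDvd u G.Δ := hmin _ ha hsΔ
    have hug : LDvd u ((a :: b :: T').prod) :=
      hmin _ (by rw [List.prod_cons]; exact ldvd_mul a _) hsg
    by_cases hau' : a = u
    · exact hau' ▸ hsu
    · exfalso
      have := hN 0 (by simp) u huΔ (by simpa using hau) (by simpa using hau')
      exact this (by simpa using hug)

lemma dnormal_tail (G : GarsideMonoid M) {a : M} {T : List M} (hN : DNormal G (a :: T)) : DNormal G T := by
  intro i hi s hsΔ h1 h2
  have := hN (i + 1) (by simpa using Nat.succ_lt_succ hi) s hsΔ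
  simpa using this h1 h2

lemma dnormal_cons (G : GarsideMonoid M) {a : M} {T : List M}
    (hT : DNormal G T)
    (hhead : ∀ s : M, LDvd s G.Δ → LDvd a s → a ≠ s → ¬ LDvd s ((a :: T).prod)) :
    DNormal G (a :: T) := by
  intro i hi s hsΔ h1 h2
  cases i with
  | zero => simpa using hhead s hsΔ (by simpa using h1) (by simpa using h2)
  | succ j =>
    have hj : j + 1 < T.length := by simpa using hi
    simpa using hT j hj s hsΔ (by simpa using h1) (by simpa using h2)

lemma last_ne_one_cons {a : M} {T : List M} (ha : a ≠ 1) (hT : T.getLast? ≠ some 1) :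
    (a :: T).getLast? ≠ some 1 := by
  cases T with
  | nil => simpa using ha
  | cons b T' => rwa [List.getLast?_cons_cons]

lemma last_ne_one_tail {a : M} {T : List M} (h : (a :: T).getLast? ≠ some 1) :
    T.getLast? ≠ some 1 := by
  cases T with
  | nil => simp
  | cons b T' => rwa [List.getLast?_cons_cons] at h

/-- A word satisfying the conditions with product `1` is empty. -/
lemma nil_of_prod_one (G : GarsideMonoid M) {L : List M} (hlast : L.getLast? ≠ some 1) (hprod : L.prod = 1) :
    L = [] := by
  cases L with
  | nil => rfl
  | cons a T =>
    exfalso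
    have hall := eq_one_of_prod_eq_one G hprod
    have hmem : (a :: T).getLast (by simp) ∈ a :: T := List.getLast_mem _
    have := hall _ hmem
    rw [List.getLast?_eq_getLast (l := a :: T) (by simp), this] at hlast
    exact hlast rfl

/-- Existence part. -/
lemma exists_normal (G : GarsideMonoid M) : ∀ (n : ℕ) (g : M), G.lam g ≤ n →
    ∃ L : List M, (∀ x ∈ L, LDvd x G.Δ) ∧ DNormal G L ∧ L.getLast? ≠ some 1 ∧ L.prod = g := by
  intro n
  induction n with
  | zero =>
    intro g hg
    have : g = 1 := garside_eq_one G (Nat.le_zero.mp hg)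
    subst this
    exact ⟨[], by simp, fun i hi => by simp at hi, by simp, by simp⟩
  | succ n ih =>
    intro g hg
    by_cases hg1 : g = 1
    · subst hg1
      exact ⟨[], by simp, fun i hi => by simp at hi, by simp, by simp⟩
    · obtain ⟨h, hhg, hhΔ, hmax⟩ := G.exists_left_gcd g G.Δ
      have hne : h ≠ 1 := by
        obtain ⟨d, hd1, hdΔ, hdg⟩ := exists_nontrivial_ldvd G hg1
        have hdh : LDvd d h := hmax d hdg hdΔ
        intro h1
        subst h1
        obtain ⟨c, hc⟩ := hdh
        have := G.lam_superadd d c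
        rw [hc, lam_one] at this
        exact hd1 (garside_eq_one G (by omega))
      obtain ⟨g', rfl⟩ := hhg
      have hlam : G.lam g' ≤ n := by
        have := G.lam_superadd h g'
        have h1 : G.lam h ≠ 0 := G.lam_ne_zero h hne
        omega
      obtain ⟨T, hTdvd, hTN, hTlast, hTprod⟩ := ih g' hlam
      refine ⟨h :: T, ?_, ?_, last_ne_one_cons hne hTlast, by rw [List.prod_cons, hTprod]⟩
      · intro x hx
        rcases List.mem_cons.mp hx with rfl | hx
        · exact hhΔ
        · exact hTdvd x hx
      · refine dnormal_cons G hTN ?_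
        intro s hsΔ hhs hns hsg
        rw [List.prod_cons, hTprod] at hsg
        have : LDvd s h := hmax s hsg hsΔ
        exact hns (ldvd_antisymm G hhs this)

/-- Uniqueness part. -/
lemma normal_unique (G : GarsideMonoid M) : ∀ (L L' : List M) (g : M),
    (∀ x ∈ L, LDvd x G.Δ) → DNormal G L → L.getLast? ≠ some 1 → L.prod = g →
    (∀ x ∈ L', LDvd x G.Δ) → DNormal G L' → L'.getLast? ≠ some 1 → L'.prod = g →
    L = L' := by
  intro L
  induction L with
  | nil =>
    intro L' g _ _ _ hprod _ _ hlast' hprod'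
    simp at hprod
    exact (nil_of_prod_one G hlast' (by rw [hprod', ← hprod])).symm
  | cons a T ih =>
    intro L' g hdvd hN hlast hprod hdvd' hN' hlast' hprod'
    have hg1 : g ≠ 1 := by
      intro h
      have := nil_of_prod_one G hlast (h ▸ hprod)
      simp at this
    cases L' with
    | nil =>
      exfalso; exact hg1 (by rw [← hprod']; simp)
    | cons b T' =>
      -- heads are equal
      have hab : a = b := by
        have h1 : LDvd b a := head_min G (hdvd a (List.mem_cons_self)) hN
          (hdvd' b (List.mem_cons_self))
          (by rw [hprod, ← hprod', List.prod_cons]; exact ldvd_mul b T'.prod)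
        have h2 : LDvd a b := head_min G (hdvd' b (List.mem_cons_self)) hN'
          (hdvd a (List.mem_cons_self))
          (by rw [hprod', ← hprod, List.prod_cons]; exact ldvd_mul a T.prod)
        exact ldvd_antisymm G h2 h1
      subst hab
      have hTT : T.prod = T'.prod := by
        apply G.mul_left_cancel a
        rw [← List.prod_cons, ← List.prod_cons, hprod, hprod']
      have := ih T' T.prod
        (fun x hx => hdvd x (List.mem_cons_of_mem _ hx))
        (dnormal_tail G hN) (last_ne_one_tail hlast) rfl
        (fun x hx => hdvd' x (List.mem_cons_of_mem _ hx))
        (dnormal_tail G hN') (last_ne_one_tail hlast') hTT.symm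
      rw [this]

end Aux


/-- In a Garside monoid `(M, Δ)`, every element admits a unique strict
`Δ`-normal decomposition (the empty word for `g = 1`). -/
theorem garsideMonoid_unique_deltaNormal {M : Type*} [Monoid M] (G : GarsideMonoid M)
    (g : M) :
    ∃! L : List M,
      (∀ x ∈ L, LDvd x G.Δ) ∧ DNormal G L ∧ L.getLast? ≠ some 1 ∧ L.prod = g := by
  obtain ⟨L, h1, h2, h3, h4⟩ := exists_normal G (G.lam g) g le_rfl
  refine ⟨L, ⟨h1, h2, h3, h4⟩, ?_⟩
  rintro L' ⟨h1', h2', h3', h4'⟩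
  exact normal_unique G L' L g h1' h2' h3' h4' h1 h2 h3 h4
end

section
/- If (M, Δ) is a Garside monoid, then for all s_1, s_2 in Div(Δ) there exist unique s'_1, s'_2 in Div(Δ) such that s'_1 s'_2 = s_1 s_2 in M and the length-two word s'_1|s'_2 is Δ-normal; namely s'_1 is the left-gcd of s_1 s_2 and Δ. -/
/-- In a Garside monoid `(M, Δ)`, for all `s₁, s₂ ∈ Div(Δ)` there are
unique `s'₁, s'₂ ∈ Div(Δ)` with `s'₁ s'₂ = s₁ s₂` and `s'₁|s'₂` `Δ`-normal; moreover
`s'₁` is the left-gcd of `s₁ s₂` and `Δ`. -/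
theorem garsideMonoid_pair_normalisation {M : Type*} [Monoid M] (G : GarsideMonoid M)
    (s₁ s₂ : M) (h₁ : LDvd s₁ G.Δ) (h₂ : LDvd s₂ G.Δ) :
    (∃! p : M × M,
      LDvd p.1 G.Δ ∧ LDvd p.2 G.Δ ∧ p.1 * p.2 = s₁ * s₂ ∧ DNormal G [p.1, p.2]) ∧
    (∀ p : M × M, LDvd p.1 G.Δ → LDvd p.2 G.Δ → p.1 * p.2 = s₁ * s₂ →
      DNormal G [p.1, p.2] →
      LDvd p.1 (s₁ * s₂) ∧ LDvd p.1 G.Δ ∧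
        ∀ e : M, LDvd e (s₁ * s₂) → LDvd e G.Δ → LDvd e p.1) := by
  classical
  obtain ⟨d, hd1, hd2, hdmax⟩ := G.exists_left_gcd (s₁ * s₂) G.Δ
  have lam1 : G.lam 1 = 0 := by
    have := G.lam_superadd 1 1
    simp only [mul_one] at this
    omega
  have antisymm : ∀ a b : M, LDvd a b → LDvd b a → a = b := by
    rintro a b ⟨c, hc⟩ ⟨c', hc'⟩
    have h : a * (c * c') = a * 1 := by rw [← mul_assoc, hc, hc', mul_one]
    have hcc : c * c' = 1 := G.mul_left_cancel _ _ _ h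
    have hc1 : c = 1 := by
      by_contra hne
      have h1 := G.lam_ne_zero c hne
      have h2 := G.lam_superadd c c'
      rw [hcc, lam1] at h2
      omega
    rw [hc1, mul_one] at hc
    exact hc
  obtain ⟨u, hu⟩ := hdmax s₁ ⟨s₂, rfl⟩ h₁
  obtain ⟨t, hdt⟩ := hd1
  have hut : u * t = s₂ := by
    apply G.mul_left_cancel s₁
    rw [← mul_assoc, hu, hdt]
  have ht : LDvd t G.Δ := by
    rw [G.ldvd_iff_rdvd]
    obtain ⟨c, hc⟩ := (G.ldvd_iff_rdvd s₂).mp h₂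
    exact ⟨c * u, by rw [mul_assoc, hut, hc]⟩
  have hnorm : DNormal G [d, t] := by
    intro i hi s hs hds hne hsprod
    simp only [List.length_cons, List.length_nil] at hi
    have hi0 : i = 0 := by omega
    subst hi0
    simp only [List.getD, List.getElem?_cons_zero, Option.getD_some] at hds hne
    simp only [List.drop_zero, List.prod_cons, List.prod_nil, mul_one] at hsprod
    rw [hdt] at hsprod
    have hsd : LDvd s d := hdmax s hsprod hs
    exact hne (antisymm d s hds hsd)
  -- key : any valid pair has first component d
  have key : ∀ a b : M, LDvd a G.Δ → a * b = s₁ * s₂ → DNormal G [a, b] → a = d := by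
    intro a b ha hab hn
    have had : LDvd a d := hdmax a ⟨b, hab⟩ ha
    by_contra hne
    refine hn 0 (by simp) d hd2 ?_ hne ?_
    · simpa using had
    · simp only [List.drop_zero, List.prod_cons, List.prod_nil, mul_one]
      rw [hab]
      exact ⟨t, hdt⟩
  constructor
  · refine ⟨(d, t), ⟨hd2, ht, hdt, hnorm⟩, ?_⟩
    rintro ⟨a, b⟩ ⟨ha, hb, hab, hn⟩
    have had : a = d := key a b ha hab hn
    subst had
    have hbt : b = t := G.mul_left_cancel a b t (by rw [hab, hdt])
    rw [hbt]
  · rintro ⟨a, b⟩ ha hb hab hn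
    have had : a = d := key a b ha hab hn
    subst had
    exact ⟨⟨b, hab⟩, ha, fun e he heΔ => hdmax e he heΔ⟩
end

section
/- If (M, Δ) is a Garside monoid, then the right domino rule is valid for Δ-normal words of length two: whenever s_1, s_2, s'_1, s'_2, t_0, t_1, t_2 lie in Div(Δ) and satisfy t_0 s'_1 = s_1 t_1 and t_1 s'_2 = s_2 t_2 in M, if the words s_1|s_2, t_0|s'_1 and t_1|s'_2 are Δ-normal, then s'_1|s'_2 is Δ-normal. -/
namespace GarsideAux

theorem ldvd_trans {M : Type*} [Monoid M] {a b c : M} (h1 : LDvd a b) (h2 : LDvd b c) :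
    LDvd a c := by
  obtain ⟨u, hu⟩ := h1; obtain ⟨v, hv⟩ := h2
  exact ⟨u * v, by rw [← mul_assoc, hu, hv]⟩

/-- The right complement of a divisor of `Δ` is again a divisor of `Δ`. -/
theorem partial_comp {M : Type*} [Monoid M] (G : GarsideMonoid M) {u : M} (hu : LDvd u G.Δ) :
    ∃ v, u * v = G.Δ ∧ LDvd v G.Δ := by
  obtain ⟨v, hv⟩ := hu
  exact ⟨v, hv, (G.ldvd_iff_rdvd v).mpr ⟨u, hv⟩⟩

/-- `Δ`-conjugation: for `u ∈ Div Δ` there is `c ∈ Div Δ` with `u Δ = Δ c`. -/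
theorem conj_exists {M : Type*} [Monoid M] (G : GarsideMonoid M) {u : M} (hu : LDvd u G.Δ) :
    ∃ c, LDvd c G.Δ ∧ u * G.Δ = G.Δ * c := by
  obtain ⟨v, huv, hv⟩ := partial_comp G hu
  obtain ⟨w, hvw, hw⟩ := partial_comp G hv
  refine ⟨w, hw, ?_⟩
  calc u * G.Δ = u * (v * w) := by rw [hvw]
    _ = u * v * w := by rw [mul_assoc]
    _ = G.Δ * w := by rw [huv]

/-- `Δ`-conjugation is surjective on `Div Δ`. -/
theorem conj_surj {M : Type*} [Monoid M] (G : GarsideMonoid M) {c : M} (hc : LDvd c G.Δ) :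
    ∃ u, LDvd u G.Δ ∧ u * G.Δ = G.Δ * c := by
  obtain ⟨b, hb⟩ := (G.ldvd_iff_rdvd c).mp hc
  obtain ⟨u, hu⟩ := (G.ldvd_iff_rdvd b).mp ⟨c, hb⟩
  refine ⟨u, ⟨b, hu⟩, ?_⟩
  calc u * G.Δ = u * (b * c) := by rw [hb]
    _ = u * b * c := by rw [mul_assoc]
    _ = G.Δ * c := by rw [hu]

/-- Divisibility descends along `Δ`-conjugation. -/
theorem conj_down {M : Type*} [Monoid M] (G : GarsideMonoid M) {a b fa fb : M}
    (hb : LDvd b G.Δ) (hfa : a * G.Δ = G.Δ * fa) (hfb : b * G.Δ = G.Δ * fb)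
    (h : LDvd fa fb) : LDvd a b := by
  obtain ⟨c, hc⟩ := h
  -- fb ∈ Div Δ, by uniqueness of the conjugate of b
  obtain ⟨fb', hfb'Δ, hfb'⟩ := conj_exists G hb
  have hfbΔ : LDvd fb G.Δ := by
    have : fb = fb' := G.mul_left_cancel G.Δ _ _ (hfb.symm.trans hfb')
    rwa [this]
  -- c ∈ Div Δ
  obtain ⟨z, hz⟩ := hfbΔ
  have hczΔ : LDvd (c * z) G.Δ :=
    (G.ldvd_iff_rdvd _).mpr ⟨fa, by rw [← mul_assoc, hc, hz]⟩
  have hcΔ : LDvd c G.Δ := ldvd_trans ⟨z, rfl⟩ hczΔ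
  obtain ⟨c₀, _, hc₀⟩ := conj_surj G hcΔ
  refine ⟨c₀, G.mul_right_cancel G.Δ _ _ ?_⟩
  calc a * c₀ * G.Δ = a * (c₀ * G.Δ) := by rw [mul_assoc]
    _ = a * (G.Δ * c) := by rw [hc₀]
    _ = a * G.Δ * c := by rw [mul_assoc]
    _ = G.Δ * fa * c := by rw [hfa]
    _ = G.Δ * (fa * c) := by rw [mul_assoc]
    _ = G.Δ * fb := by rw [hc]
    _ = b * G.Δ := hfb.symm

end GarsideAux

/-- In a Garside monoid `(M, Δ)`, the right domino rule is valid for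
`Δ`-normal words of length two. -/
theorem garsideMonoid_right_domino_rule {M : Type*} [Monoid M] (G : GarsideMonoid M)
    (s₁ s₂ s₁' s₂' t₀ t₁ t₂ : M)
    (hs₁ : LDvd s₁ G.Δ) (hs₂ : LDvd s₂ G.Δ) (hs₁' : LDvd s₁' G.Δ) (hs₂' : LDvd s₂' G.Δ)
    (ht₀ : LDvd t₀ G.Δ) (ht₁ : LDvd t₁ G.Δ) (ht₂ : LDvd t₂ G.Δ)
    (e₁ : t₀ * s₁' = s₁ * t₁) (e₂ : t₁ * s₂' = s₂ * t₂)
    (n₁ : DNormal G [s₁, s₂]) (n₂ : DNormal G [t₀, s₁']) (n₃ : DNormal G [t₁, s₂']) :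
    DNormal G [s₁', s₂'] := by
  intro i hi s hsΔ hdivs hne hdvd
  simp only [List.length_cons, List.length_nil] at hi
  have hi0 : i = 0 := by omega
  subst hi0
  simp only [List.getD_cons_zero] at hdivs hne
  simp only [List.drop_zero, List.prod_cons, List.prod_nil, mul_one] at hdvd
  -- hdivs : LDvd s₁' s, hne : s₁' ≠ s, hdvd : LDvd s (s₁' * s₂')
  obtain ⟨r, hr⟩ := hdivs
  have hrs₂' : LDvd r s₂' := by
    obtain ⟨u, hu⟩ := hdvd
    exact ⟨u, G.mul_left_cancel s₁' _ _ (by rw [← mul_assoc, hr, hu])⟩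
  obtain ⟨ds₁', hds₁', hds₁'Δ⟩ := GarsideAux.partial_comp G hs₁'
  have hrds₁' : LDvd r ds₁' := by
    obtain ⟨z, hz⟩ := hsΔ
    exact ⟨z, G.mul_left_cancel s₁' _ _ (by rw [← mul_assoc, hr, hz, hds₁'])⟩
  obtain ⟨ds₁, hds₁, hds₁Δ⟩ := GarsideAux.partial_comp G hs₁
  obtain ⟨ft₀, hft₀Δ, hft₀⟩ := GarsideAux.conj_exists G ht₀
  have key : t₁ * ds₁' = ds₁ * ft₀ := by
    apply G.mul_left_cancel s₁
    calc s₁ * (t₁ * ds₁') = (s₁ * t₁) * ds₁' := by rw [mul_assoc]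
      _ = (t₀ * s₁') * ds₁' := by rw [e₁]
      _ = t₀ * (s₁' * ds₁') := by rw [mul_assoc]
      _ = t₀ * G.Δ := by rw [hds₁']
      _ = G.Δ * ft₀ := hft₀
      _ = (s₁ * ds₁) * ft₀ := by rw [hds₁]
      _ = s₁ * (ds₁ * ft₀) := by rw [mul_assoc]
  have hA : LDvd (t₁ * r) (ds₁ * G.Δ) := by
    obtain ⟨q, hq⟩ := hrds₁'
    obtain ⟨p, hp⟩ := hft₀Δ
    refine ⟨q * p, ?_⟩
    calc t₁ * r * (q * p) = t₁ * (r * q) * p := by rw [← mul_assoc, mul_assoc t₁]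
      _ = t₁ * ds₁' * p := by rw [hq]
      _ = ds₁ * ft₀ * p := by rw [key]
      _ = ds₁ * (ft₀ * p) := by rw [mul_assoc]
      _ = ds₁ * G.Δ := by rw [hp]
  have hB : LDvd (t₁ * r) (s₂ * G.Δ) := by
    obtain ⟨q, hq⟩ := hrs₂'
    obtain ⟨p, hp⟩ := ht₂
    refine ⟨q * p, ?_⟩
    calc t₁ * r * (q * p) = t₁ * (r * q) * p := by rw [← mul_assoc, mul_assoc t₁]
      _ = t₁ * s₂' * p := by rw [hq]
      _ = s₂ * t₂ * p := by rw [e₂]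
      _ = s₂ * (t₂ * p) := by rw [mul_assoc]
      _ = s₂ * G.Δ := by rw [hp]
  obtain ⟨g, hg1, hg2, hgmax⟩ := G.exists_left_gcd (ds₁ * G.Δ) (s₂ * G.Δ)
  obtain ⟨fds₁, hfds₁Δ, hfds₁⟩ := GarsideAux.conj_exists G hds₁Δ
  obtain ⟨fs₂, hfs₂Δ, hfs₂⟩ := GarsideAux.conj_exists G hs₂
  have hΔg : LDvd G.Δ g := hgmax G.Δ ⟨fds₁, hfds₁.symm⟩ ⟨fs₂, hfs₂.symm⟩
  obtain ⟨w, hw⟩ := hΔg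
  have hwfds₁ : LDvd w fds₁ := by
    obtain ⟨u, hu⟩ := hg1
    refine ⟨u, G.mul_left_cancel G.Δ _ _ ?_⟩
    rw [← mul_assoc, hw, hu, hfds₁]
  have hwfs₂ : LDvd w fs₂ := by
    obtain ⟨u, hu⟩ := hg2
    refine ⟨u, G.mul_left_cancel G.Δ _ _ ?_⟩
    rw [← mul_assoc, hw, hu, hfs₂]
  have hwΔ : LDvd w G.Δ := GarsideAux.ldvd_trans hwfds₁ hfds₁Δ
  obtain ⟨w', hw'Δ, hw'conj⟩ := GarsideAux.conj_surj G hwΔ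
  have hw'ds₁ : LDvd w' ds₁ := GarsideAux.conj_down G hds₁Δ hw'conj hfds₁ hwfds₁
  have hw's₂ : LDvd w' s₂ := GarsideAux.conj_down G hs₂ hw'conj hfs₂ hwfs₂
  -- normality of s₁|s₂ forces w' = 1
  have hw'1 : w' = 1 := by
    by_contra hne1
    have h1 : LDvd (s₁ * w') G.Δ := by
      obtain ⟨q, hq⟩ := hw'ds₁
      exact ⟨q, by rw [mul_assoc, hq, hds₁]⟩
    have h3 : ([s₁, s₂] : List M).getD 0 1 ≠ s₁ * w' := by
      simp only [List.getD_cons_zero]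
      intro h
      exact hne1 (G.mul_left_cancel s₁ 1 w' (by rw [mul_one, ← h])).symm
    have h4 : LDvd (s₁ * w') (([s₁, s₂].drop 0).prod) := by
      simp only [List.drop_zero, List.prod_cons, List.prod_nil, mul_one]
      obtain ⟨q, hq⟩ := hw's₂
      exact ⟨q, by rw [mul_assoc, hq]⟩
    exact n₁ 0 (by simp) (s₁ * w') h1 ⟨w', rfl⟩ h3 h4
  have hwone : w = 1 := by
    apply G.mul_left_cancel G.Δ
    rw [mul_one, ← hw'conj, hw'1, one_mul]
  have hgΔ : g = G.Δ := by rw [← hw, hwone, mul_one]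
  have htr : LDvd (t₁ * r) G.Δ := hgΔ ▸ hgmax (t₁ * r) hA hB
  -- normality of t₁|s₂' forces r = 1
  have hr1 : r = 1 := by
    by_contra hner
    have h3 : ([t₁, s₂'] : List M).getD 0 1 ≠ t₁ * r := by
      simp only [List.getD_cons_zero]
      intro h
      exact hner (G.mul_left_cancel t₁ 1 r (by rw [mul_one, ← h])).symm
    have h4 : LDvd (t₁ * r) (([t₁, s₂'].drop 0).prod) := by
      simp only [List.drop_zero, List.prod_cons, List.prod_nil, mul_one]
      obtain ⟨q, hq⟩ := hrs₂'
      exact ⟨q, by rw [mul_assoc, hq]⟩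
    exact n₃ 0 (by simp) (t₁ * r) htr ⟨r, rfl⟩ h3 h4
  exact hne (by rw [← hr, hr1, mul_one])
end

section
/- If M is a left-cancellative monoid whose only invertible element is 1 and S is a subset of M, then every element of M admits at most one strict S-normal decomposition. -/
/-- An `S`-word `s_1|…|s_p` is `S`-normal if, for every `i < p`, every `s ∈ S` and every
`f ∈ M`, `s ≼ f s_i s_{i+1}` implies `s ≼ f s_i`. -/
def SNormal {M : Type*} [Monoid M] (S : Set M) (L : List M) : Prop :=
  ∀ i : ℕ, i + 1 < L.length → ∀ s ∈ S, ∀ f : M,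
    LDvd s (f * L.getD i 1 * L.getD (i + 1) 1) → LDvd s (f * L.getD i 1)

/-- `S` is a Garside family in `M` if `1 ∈ S` and every element of `M` admits an
`S`-normal decomposition. -/
def GarsideFamily {M : Type*} [Monoid M] (S : Set M) : Prop :=
  (1 : M) ∈ S ∧ ∀ g : M, ∃ L : List M, (∀ x ∈ L, x ∈ S) ∧ SNormal S L ∧ L.prod = g

/-- The tail of an `S`-normal word is `S`-normal. -/
lemma SNormal.tail {M : Type*} [Monoid M] {S : Set M} {a : M} {L : List M}
    (h : SNormal S (a :: L)) : SNormal S L := by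
  intro i hi s hs f hd
  have := h (i+1) (by simpa using Nat.succ_lt_succ hi) s hs f
  simpa using this (by simpa using hd)

/-- If `L` is `S`-normal and `s ∈ S` left-divides `f * L.prod`, then `s` left-divides
`f` times the head of `L`. -/
lemma sNormal_head_dvd {M : Type*} [Monoid M] {S : Set M} :
    ∀ L : List M, SNormal S L → ∀ s ∈ S, ∀ f : M,
      LDvd s (f * L.prod) → LDvd s (f * L.headD 1)
  | [] => by intro _ s hs f h; simpa using h
  | [a] => by intro _ s hs f h; simpa using h
  | a :: b :: rest => by
    intro hn s hs f h
    have h1 : LDvd s ((f * a) * (b :: rest).prod) := by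
      simpa [mul_assoc] using h
    have h2 := sNormal_head_dvd (b :: rest) hn.tail s hs (f * a) h1
    have h0 := hn 0 (by simp) s hs f
    simp only [List.getD_cons_zero, List.getD_cons_succ] at h0
    exact h0 (by simp only [List.headD_cons] at h2; exact h2)

/-- In a monoid with only trivial units, a strict word with product `1` is empty. -/
lemma prod_one_eq_nil {M : Type*} [Monoid M]
    (hcan : ∀ a b c : M, a * b = a * c → b = c)
    (hunit : ∀ a : M, IsUnit a → a = 1)
    (L : List M) (hp : L.prod = 1) (hl : L.getLast? ≠ some 1) : L = [] := by
  rcases L.eq_nil_or_concat with rfl | ⟨l, t, rfl⟩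
  · rfl
  · exfalso
    have hab : l.prod * t = 1 := by simpa using hp
    have hba : t * l.prod = 1 := by
      have : l.prod * (t * l.prod) = l.prod * 1 := by
        rw [← mul_assoc, hab, one_mul, mul_one]
      exact hcan _ _ _ this
    have : t = 1 := hunit t ⟨⟨t, l.prod, hba, hab⟩, rfl⟩
    exact hl (by simpa [this] using (List.getLast?_concat l (1 : M)))

/-- Two strict `S`-normal words with the same product are equal. -/
lemma sNormal_unique_aux {M : Type*} [Monoid M]
    (hcan : ∀ a b c : M, a * b = a * c → b = c)
    (hunit : ∀ a : M, IsUnit a → a = 1) (S : Set M) :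
    ∀ L₁ L₂ : List M, (∀ x ∈ L₁, x ∈ S) → SNormal S L₁ → L₁.getLast? ≠ some 1 →
      (∀ x ∈ L₂, x ∈ S) → SNormal S L₂ → L₂.getLast? ≠ some 1 →
      L₁.prod = L₂.prod → L₁ = L₂ := by
  intro L₁
  induction L₁ with
  | nil =>
    intro L₂ _ _ _ m₂ n₂ s₂ hp
    exact (prod_one_eq_nil hcan hunit L₂ (by simpa using hp.symm) s₂).symm
  | cons a l ih =>
    intro L₂ m₁ n₁ s₁ m₂ n₂ s₂ hp
    cases L₂ with
    | nil =>
      exact absurd (prod_one_eq_nil hcan hunit (a :: l) (by simpa using hp) s₁)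
        (by simp)
    | cons b l₂ =>
      have hba : LDvd b a := by
        have : LDvd b ((1:M) * (a :: l).prod) := by
          refine ⟨l₂.prod, ?_⟩
          simpa [List.prod_cons, mul_assoc] using hp.symm
        simpa using sNormal_head_dvd (a :: l) n₁ b (m₂ b (by simp)) 1 this
      have hab : LDvd a b := by
        have : LDvd a ((1:M) * (b :: l₂).prod) := by
          refine ⟨l.prod, ?_⟩
          simpa [List.prod_cons, mul_assoc] using hp
        simpa using sNormal_head_dvd (b :: l₂) n₂ a (m₁ a (by simp)) 1 this
      obtain ⟨c, hc⟩ := hba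
      obtain ⟨d, hd⟩ := hab
      have hcd : c * d = 1 := hcan b _ _ (by rw [← mul_assoc, hc, hd, mul_one])
      have hdc : d * c = 1 := hcan a _ _ (by rw [← mul_assoc, hd, hc, mul_one])
      have hceq : c = 1 := hunit c ⟨⟨c, d, hcd, hdc⟩, rfl⟩
      have hab' : a = b := by rw [← hc, hceq, mul_one]
      subst hab'
      have hpt : l.prod = l₂.prod := by
        apply hcan a
        simpa [List.prod_cons] using hp
      have hlast : ∀ x : M, ∀ L : List M, (a :: L).getLast? ≠ some (1:M) →
          L.getLast? ≠ some (1:M) := by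
        intro x L h
        cases L with
        | nil => simp
        | cons y L' => simpa using h
      congr 1
      exact ih l₂ (fun x hx => m₁ x (by simp [hx])) n₁.tail (hlast a l s₁)
        (fun x hx => m₂ x (by simp [hx])) n₂.tail (hlast a l₂ s₂) hpt

/-- If `M` is a left-cancellative monoid whose only invertible element
is `1` and `S ⊆ M`, then every element of `M` admits at most one strict `S`-normal
decomposition. -/
theorem strict_sNormal_decomposition_unique {M : Type*} [Monoid M]
    (hcan : ∀ a b c : M, a * b = a * c → b = c)
    (hunit : ∀ a : M, IsUnit a → a = 1)
    (S : Set M) (g : M) (L₁ L₂ : List M)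
    (h₁ : (∀ x ∈ L₁, x ∈ S) ∧ SNormal S L₁ ∧ L₁.getLast? ≠ some 1 ∧ L₁.prod = g)
    (h₂ : (∀ x ∈ L₂, x ∈ S) ∧ SNormal S L₂ ∧ L₂.getLast? ≠ some 1 ∧ L₂.prod = g) :
    L₁ = L₂ := by
  obtain ⟨m₁, n₁, s₁, p₁⟩ := h₁
  obtain ⟨m₂, n₂, s₂, p₂⟩ := h₂
  exact sNormal_unique_aux hcan hunit S L₁ L₂ m₁ n₁ s₁ m₂ n₂ s₂ (p₁.trans p₂.symm)
end

section
/- If M is a left-cancellative monoid whose only invertible element is 1 and S is a Garside family in M, then the left domino rule is valid for S-normal words of length two: whenever s_1, s_2, s'_1, s'_2, t_0, t_1, t_2 lie in S and satisfy s'_1 t_1 = t_0 s_1 and s'_2 t_2 = t_1 s_2 in M, if the words s_1|s_2, s'_1|t_1 and s'_2|t_2 are S-normal, then s'_1|s'_2 is S-normal. -/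
/-- If `M` is a left-cancellative monoid whose only invertible element
is `1` and `S` is a Garside family in `M`, then the left domino rule is valid for
`S`-normal words of length two. -/
theorem garsideFamily_left_domino_rule {M : Type*} [Monoid M]
    (hcan : ∀ a b c : M, a * b = a * c → b = c)
    (hunit : ∀ a : M, IsUnit a → a = 1)
    (S : Set M) (hS : GarsideFamily S)
    (s₁ s₂ s₁' s₂' t₀ t₁ t₂ : M)
    (ms₁ : s₁ ∈ S) (ms₂ : s₂ ∈ S) (ms₁' : s₁' ∈ S) (ms₂' : s₂' ∈ S)
    (mt₀ : t₀ ∈ S) (mt₁ : t₁ ∈ S) (mt₂ : t₂ ∈ S)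
    (e₁ : s₁' * t₁ = t₀ * s₁) (e₂ : s₂' * t₂ = t₁ * s₂)
    (n₁ : SNormal S [s₁, s₂]) (n₂ : SNormal S [s₁', t₁]) (n₃ : SNormal S [s₂', t₂]) :
    SNormal S [s₁', s₂'] := by
  intro i hi s hs f hd
  simp only [List.length] at hi
  obtain rfl : i = 0 := by omega
  simp only [List.getD, List.getElem?_cons_zero, List.getElem?_cons_succ, Option.getD] at hd ⊢
  obtain ⟨c, hc⟩ := hd
  have h1 : LDvd s (f * t₀ * s₁ * s₂) := by
    refine ⟨c * t₂, ?_⟩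
    have h : f * t₀ * s₁ * s₂ = f * s₁' * s₂' * t₂ := by
      rw [mul_assoc f t₀, ← e₁, mul_assoc (f * s₁'), e₂, ← mul_assoc, ← mul_assoc]
    rw [h, ← hc, mul_assoc]
  have h2 : LDvd s (f * t₀ * s₁) := by
    have h := n₁ 0 (by norm_num) s hs (f * t₀)
    simpa [List.getD] using h (by simpa [List.getD] using h1)
  have h3 : LDvd s (f * s₁' * t₁) := by
    rwa [mul_assoc, ← e₁, ← mul_assoc] at h2
  have h4 := n₂ 0 (by norm_num) s hs f
  simpa [List.getD] using h4 (by simpa [List.getD] using h3)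
end

section
/- Let M be a left-cancellative monoid whose only invertible element is 1 and let S be a Garside family in M. Then for every S-word w of length p ≥ 2 there exists a unique S-normal S-word of length p representing the same element of M as w, and this word equals N̄^S_{δ_p}(w), where N̄^S maps a length-two S-word s|t to the unique S-normal length-two S-word s'|t' with s't' = st, N̄^S_i applies N̄^S at positions i, i+1, N̄^S_{i_1|…|i_n} := N̄^S_{i_n} ∘ ⋯ ∘ N̄^S_{i_1}, and δ_p is defined by δ_2 := 1 and δ_p := sh(δ_{p−1})|1|2|…|p−1 with sh shifting every entry by +1. -/
/-- Apply `F` to the entries at (1-based) positions `i, i+1` of a word. -/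
def applyAt {α : Type*} (F : α × α → α × α) : ℕ → List α → List α
  | 1, a :: b :: t => (F (a, b)).1 :: (F (a, b)).2 :: t
  | n + 2, a :: t => a :: applyAt F (n + 1) t
  | _, l => l

/-- Apply `F` successively at the positions listed in `u` (leftmost entry first). -/
def applySeq {α : Type*} (F : α × α → α × α) (u : List ℕ) (w : List α) : List α :=
  u.foldl (fun v i => applyAt F i v) w

/-- The sequence of positions `δ_p`: `δ_2 = 1` and `δ_p = sh(δ_{p−1})|1|2|…|p−1`,
where `sh` shifts every entry by `+1`. -/
def deltaSeq : ℕ → List ℕ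
  | 0 => []
  | p + 1 => (deltaSeq p).map (· + 1) ++ (List.range p).map (· + 1)

section Aux
variable {M : Type*} [Monoid M] {S : Set M}

theorem LDvd.mul_right {s x : M} (h : LDvd s x) (y : M) : LDvd s (x * y) := by
  obtain ⟨c, hc⟩ := h; exact ⟨c * y, by rw [← mul_assoc, hc]⟩

theorem snormal_pair {u v : M} (h : SNormal S [u, v]) :
    ∀ s ∈ S, ∀ f : M, LDvd s (f * u * v) → LDvd s (f * u) := by
  intro s hs f hd
  have := h 0 (by simp) s hs f
  simpa using this (by simpa using hd)

theorem snormal_tail {x : M} {L : List M} (h : SNormal S (x :: L)) : SNormal S L := by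
  intro i hi s hs f hd
  have := h (i + 1) (by simpa using Nat.succ_lt_succ hi) s hs f
  simpa using this (by simpa using hd)

theorem snormal_cons {x : M} {L : List M}
    (hx : ∀ s ∈ S, ∀ f : M, LDvd s (f * x * L.getD 0 1) → LDvd s (f * x))
    (hL : SNormal S L) : SNormal S (x :: L) := by
  intro i hi s hs f hd
  cases i with
  | zero => simpa using hx s hs f (by simpa using hd)
  | succ j =>
    have := hL j (by simpa using Nat.lt_of_succ_lt_succ hi) s hs f
    simpa using this (by simpa using hd)

theorem applySeq_cons {α : Type*} (F : α × α → α × α) (i : ℕ) (u : List ℕ) (w : List α) :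
    applySeq F (i :: u) w = applySeq F u (applyAt F i w) := rfl

theorem applySeq_append {α : Type*} (F : α × α → α × α) (u v : List ℕ) (w : List α) :
    applySeq F (u ++ v) w = applySeq F v (applySeq F u w) :=
  List.foldl_append

theorem applyAt_one {α : Type*} (F : α × α → α × α) (a b : α) (t : List α) :
    applyAt F 1 (a :: b :: t) = (F (a, b)).1 :: (F (a, b)).2 :: t := rfl

theorem applyAt_succ_succ {α : Type*} (F : α × α → α × α) (n : ℕ) (a : α) (t : List α) :
    applyAt F (n + 2) (a :: t) = a :: applyAt F (n + 1) t := rfl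

theorem applySeq_shift {α : Type*} (F : α × α → α × α) :
    ∀ (u : List ℕ), (∀ i ∈ u, 1 ≤ i) → ∀ (x : α) (v : List α),
    applySeq F (u.map (· + 1)) (x :: v) = x :: applySeq F u v := by
  intro u
  induction u with
  | nil => intro _ x v; rfl
  | cons i u ih =>
    intro hu x v
    obtain ⟨n, rfl⟩ : ∃ n, i = n + 1 :=
      ⟨i - 1, (Nat.succ_pred_eq_of_pos (hu i (by simp))).symm⟩
    rw [List.map_cons, applySeq_cons, applyAt_succ_succ, applySeq_cons,
      ih (fun j hj => hu j (by simp [hj])) x]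

theorem deltaSeq_pos : ∀ n, ∀ i ∈ deltaSeq n, 1 ≤ i := by
  intro n
  induction n with
  | zero => simp [deltaSeq]
  | succ p ih =>
    intro i hi
    simp only [deltaSeq, List.mem_append, List.mem_map] at hi
    rcases hi with ⟨j, _, rfl⟩ | ⟨j, _, rfl⟩ <;> omega

theorem domino {a t1 t2 s1 r1 s2 r2 : M}
    (h12 : ∀ s ∈ S, ∀ f : M, LDvd s (f * t1 * t2) → LDvd s (f * t1))
    (hsr : ∀ s ∈ S, ∀ f : M, LDvd s (f * s1 * r1) → LDvd s (f * s1))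
    (he1 : s1 * r1 = a * t1) (he2 : s2 * r2 = r1 * t2) :
    ∀ s ∈ S, ∀ f : M, LDvd s (f * s1 * s2) → LDvd s (f * s1) := by
  intro s hs f hd
  have h1 : LDvd s (f * s1 * s2 * r2) := hd.mul_right r2
  have h2 : f * s1 * s2 * r2 = f * a * t1 * t2 := by
    rw [mul_assoc (f * s1), he2, ← mul_assoc, mul_assoc f s1, he1, ← mul_assoc,
      mul_assoc (f * a), ← mul_assoc]
  rw [h2] at h1
  have h3 := h12 s hs (f * a) h1
  have h4 : f * a * t1 = f * s1 * r1 := by rw [mul_assoc, ← he1, ← mul_assoc]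
  rw [h4] at h3
  exact hsr s hs f h3

theorem head_dvd : ∀ (L : List M), SNormal S L →
    ∀ s ∈ S, ∀ f : M, LDvd s (f * L.prod) → LDvd s (f * L.getD 0 1) := by
  intro L
  induction L with
  | nil => intro _ s hs f h; simpa using h
  | cons x T ih =>
    intro hL s hs f h
    have hT : SNormal S T := snormal_tail hL
    have h1 : LDvd s ((f * x) * T.prod) := by simpa [mul_assoc] using h
    have h2 := ih hT s hs (f * x) h1
    cases T with
    | nil => simpa using h2
    | cons y T' =>
      have := hL 0 (by simp) s hs f
      simpa using this (by simpa using h2)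

theorem snormal_uniq (hcan : ∀ a b c : M, a * b = a * c → b = c)
    (hunit : ∀ a : M, IsUnit a → a = 1) :
    ∀ (u v : List M), (∀ x ∈ u, x ∈ S) → (∀ x ∈ v, x ∈ S) →
      SNormal S u → SNormal S v → u.length = v.length → u.prod = v.prod → u = v := by
  intro u
  induction u with
  | nil =>
    intro v _ _ _ _ hlen _
    exact (List.eq_nil_of_length_eq_zero hlen.symm).symm
  | cons x u' ih =>
    intro v hu hv hnu hnv hlen hprod
    cases v with
    | nil => simp at hlen
    | cons y v' =>
      have hx : x ∈ S := hu x (by simp)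
      have hy : y ∈ S := hv y (by simp)
      have d1 : LDvd x (1 * (y :: v').prod) :=
        ⟨u'.prod, by rw [one_mul, ← hprod]; exact (List.prod_cons).symm⟩
      have d2 : LDvd y (1 * (x :: u').prod) :=
        ⟨v'.prod, by rw [one_mul, hprod]; exact (List.prod_cons).symm⟩
      have e1 := head_dvd (y :: v') hnv x hx 1 d1
      have e2 := head_dvd (x :: u') hnu y hy 1 d2
      simp only [List.getD_cons_zero, one_mul] at e1 e2
      obtain ⟨c, hc⟩ := e1  -- x * c = y
      obtain ⟨b, hb⟩ := e2  -- y * b = x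
      have hbc : b * c = 1 := by
        apply hcan y
        rw [← mul_assoc, hb, hc, mul_one]
      have hcb : c * b = 1 := by
        apply hcan x
        rw [← mul_assoc, hc, hb, mul_one]
      have hc1 : c = 1 := hunit c ⟨⟨c, b, hcb, hbc⟩, rfl⟩
      have hxy : x = y := by rw [← hc, hc1, mul_one]
      subst hxy
      have hprod' : u'.prod = v'.prod := by
        apply hcan x
        simpa [List.prod_cons] using hprod
      have : u' = v' := ih v' (fun z hz => hu z (by simp [hz]))
        (fun z hz => hv z (by simp [hz])) (snormal_tail hnu) (snormal_tail hnv)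
        (by simpa using hlen) hprod'
      rw [this]

theorem pass_spec (NN : M × M → M × M)
    (hNN : ∀ s t : M, s ∈ S → t ∈ S →
      (NN (s, t)).1 ∈ S ∧ (NN (s, t)).2 ∈ S ∧
      (NN (s, t)).1 * (NN (s, t)).2 = s * t ∧ SNormal S [(NN (s, t)).1, (NN (s, t)).2]) :
    ∀ (t : List M), (∀ x ∈ t, x ∈ S) → SNormal S t → ∀ a ∈ S,
      (∀ x ∈ applySeq NN ((List.range t.length).map (· + 1)) (a :: t), x ∈ S) ∧
      SNormal S (applySeq NN ((List.range t.length).map (· + 1)) (a :: t)) ∧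
      (applySeq NN ((List.range t.length).map (· + 1)) (a :: t)).length = t.length + 1 ∧
      (applySeq NN ((List.range t.length).map (· + 1)) (a :: t)).prod = a * t.prod ∧
      (t ≠ [] → (applySeq NN ((List.range t.length).map (· + 1)) (a :: t)).getD 0 1
        = (NN (a, t.getD 0 1)).1) := by
  intro t
  induction t with
  | nil =>
    intro _ _ a ha
    refine ⟨by simpa [applySeq] using ha, ?_, by simp [applySeq], by simp [applySeq], by simp⟩
    intro i hi
    simp [applySeq] at hi
  | cons t1 rest ih =>
    intro hmem hnorm a ha
    have ht1 : t1 ∈ S := hmem t1 (by simp)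
    obtain ⟨hs1, hr1, he1, hn1⟩ := hNN a t1 ha ht1
    set s1 := (NN (a, t1)).1 with hs1def
    set r1 := (NN (a, t1)).2 with hr1def
    have key : applySeq NN ((List.range (t1 :: rest).length).map (· + 1)) (a :: t1 :: rest)
        = s1 :: applySeq NN ((List.range rest.length).map (· + 1)) (r1 :: rest) := by
      rw [List.length_cons, List.range_succ_eq_map, List.map_cons, applySeq_cons,
        applyAt_one]
      have : (List.map Nat.succ (List.range rest.length)).map (· + 1)
          = ((List.range rest.length).map (· + 1)).map (· + 1) := by
        simp [Nat.succ_eq_add_one]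
      rw [this, applySeq_shift NN _ (by simp) s1]
    have hrestS : ∀ x ∈ rest, x ∈ S := fun x hx => hmem x (by simp [hx])
    have hrestN : SNormal S rest := snormal_tail hnorm
    obtain ⟨ihS, ihN, ihL, ihP, ihH⟩ := ih hrestS hrestN r1 hr1
    rw [key]
    refine ⟨?_, ?_, ?_, ?_, ?_⟩
    · intro x hx
      rcases List.mem_cons.mp hx with rfl | hx
      · exact hs1
      · exact ihS x hx
    · -- normality
      apply snormal_cons _ ihN
      cases rest with
      | nil =>
        intro s hs f hd
        exact snormal_pair hn1 s hs f (by simpa [applySeq] using hd)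
      | cons t2 rest' =>
        have ht2 : t2 ∈ S := hrestS t2 (by simp)
        obtain ⟨_, _, he2, _⟩ := hNN r1 t2 hr1 ht2
        have hhead : (applySeq NN ((List.range (t2 :: rest').length).map (· + 1))
            (r1 :: t2 :: rest')).getD 0 1 = (NN (r1, t2)).1 := by
          simpa using ihH (by simp)
        rw [hhead]
        have h12 : ∀ s ∈ S, ∀ f : M, LDvd s (f * t1 * t2) → LDvd s (f * t1) := by
          intro s hs f hd
          have := hnorm 0 (by simp) s hs f
          simpa using this (by simpa using hd)
        exact domino h12 (snormal_pair hn1) he1 he2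
    · simpa using ihL
    · rw [List.prod_cons, ihP, ← mul_assoc, he1, mul_assoc, List.prod_cons]
    · intro _
      simp
      exact hs1def

theorem main_exists (NN : M × M → M × M)
    (hNN : ∀ s t : M, s ∈ S → t ∈ S →
      (NN (s, t)).1 ∈ S ∧ (NN (s, t)).2 ∈ S ∧
      (NN (s, t)).1 * (NN (s, t)).2 = s * t ∧ SNormal S [(NN (s, t)).1, (NN (s, t)).2]) :
    ∀ (w : List M), (∀ x ∈ w, x ∈ S) →
      (∀ x ∈ applySeq NN (deltaSeq w.length) w, x ∈ S) ∧
      SNormal S (applySeq NN (deltaSeq w.length) w) ∧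
      (applySeq NN (deltaSeq w.length) w).length = w.length ∧
      (applySeq NN (deltaSeq w.length) w).prod = w.prod := by
  intro w
  induction w with
  | nil =>
    intro _
    refine ⟨by simp [applySeq, deltaSeq], ?_, by simp [applySeq, deltaSeq], by simp [applySeq, deltaSeq]⟩
    intro i hi
    simp [applySeq, deltaSeq] at hi
  | cons a t ih =>
    intro hw
    have ha : a ∈ S := hw a (by simp)
    have htS : ∀ x ∈ t, x ∈ S := fun x hx => hw x (by simp [hx])
    obtain ⟨ihS, ihN, ihL, ihP⟩ := ih htS
    set t' := applySeq NN (deltaSeq t.length) t with ht'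
    have key : applySeq NN (deltaSeq (a :: t).length) (a :: t)
        = applySeq NN ((List.range t'.length).map (· + 1)) (a :: t') := by
      rw [List.length_cons]
      show applySeq NN ((deltaSeq t.length).map (· + 1) ++ (List.range t.length).map (· + 1))
        (a :: t) = _
      rw [applySeq_append, applySeq_shift NN _ (deltaSeq_pos t.length) a, ← ht', ← ihL]
    obtain ⟨pS, pN, pL, pP, _⟩ := pass_spec NN hNN t' ihS ihN a ha
    rw [key]
    refine ⟨pS, pN, ?_, ?_⟩
    · rw [pL, ihL, List.length_cons]
    · rw [pP, ihP, List.prod_cons]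

end Aux

/-- If `M` is a left-cancellative monoid whose only invertible element
is `1` and `S` is a Garside family in `M`, then for every `S`-word `w` of length `p ≥ 2`
there is a unique `S`-normal `S`-word of length `p` with the same product as `w`, and it
equals `N̄^S_{δ_p}(w)`, where `N̄^S` maps a length-two `S`-word to the unique `S`-normal
length-two `S`-word with the same product. -/
theorem garsideFamily_deltaSeq_recipe {M : Type*} [Monoid M]
    (hcan : ∀ a b c : M, a * b = a * c → b = c)
    (hunit : ∀ a : M, IsUnit a → a = 1)
    (S : Set M) (hS : GarsideFamily S)
    (NN : M × M → M × M)
    (hNN : ∀ s t : M, s ∈ S → t ∈ S →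
      (NN (s, t)).1 ∈ S ∧ (NN (s, t)).2 ∈ S ∧
      (NN (s, t)).1 * (NN (s, t)).2 = s * t ∧ SNormal S [(NN (s, t)).1, (NN (s, t)).2])
    (w : List M) (hw : ∀ x ∈ w, x ∈ S) (hp : 2 ≤ w.length) :
    (∀ x ∈ applySeq NN (deltaSeq w.length) w, x ∈ S) ∧
    SNormal S (applySeq NN (deltaSeq w.length) w) ∧
    (applySeq NN (deltaSeq w.length) w).length = w.length ∧
    (applySeq NN (deltaSeq w.length) w).prod = w.prod ∧
    (∀ v : List M, (∀ x ∈ v, x ∈ S) → SNormal S v → v.length = w.length →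
      v.prod = w.prod → v = applySeq NN (deltaSeq w.length) w) := by
  obtain ⟨hS', hN, hL, hP⟩ := main_exists NN hNN w hw
  refine ⟨hS', hN, hL, hP, ?_⟩
  intro v hvS hvN hvL hvP
  exact snormal_uniq hcan hunit v _ hvS hS' hvN hN (by rw [hvL, hL]) (by rw [hvP, hP])
end
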